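/- arXiv:2009.10572 — 5 statements merged into one kernel-verified Lean document; each statement's English description precedes it below -/
import Mathlib

section
/- Let ℓ be a prime and let a, b, c be positive integers with b < c and a ≡ 1 (mod ℓ). Set S_b = ∑_{j=0}^{ℓ-1} a^(ℓ^b · j) and S_c = ∑_{j=0}^{ℓ-1} a^(ℓ^c · j) (so ℓ divides both S_b and S_c). Then: (i) every prime p dividing S_b / ℓ satisfies p > ℓ^(b+1); and (ii) gcd(S_b, S_c) = ℓ. In particular S_b/ℓ and S_c/ℓ are coprime. -/
open Finset

private lemma sum_cast_eq (ℓ a k m : ℕ) (h : ((a : ZMod m)) ^ (ℓ ^ k) = 1) :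
    ((∑ j ∈ range ℓ, a ^ (ℓ ^ k * j) : ℕ) : ZMod m) = (ℓ : ZMod m) := by
  push_cast
  simp [pow_mul, h]

private lemma lift_dvd (ℓ : ℕ) (x : ℤ) (h : (ℓ : ℤ) ∣ x - 1) (k : ℕ) :
    (ℓ : ℤ) ^ (k + 1) ∣ x ^ ℓ ^ k - 1 := by
  induction k with
  | zero => simpa using h
  | succ k ih =>
    have hy : (ℓ : ℤ) ∣ x ^ ℓ ^ k - 1 :=
      dvd_trans (dvd_pow_self (ℓ : ℤ) (Nat.succ_ne_zero k)) ih
    have hsum : (ℓ : ℤ) ∣ ∑ j ∈ range ℓ, (x ^ ℓ ^ k) ^ j := by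
      rcases eq_or_ne ℓ 0 with rfl | hℓ0
      · simp
      haveI : NeZero ℓ := ⟨hℓ0⟩
      have hz : ((x : ZMod ℓ)) ^ ℓ ^ k = 1 := by
        have h0 := (ZMod.intCast_zmod_eq_zero_iff_dvd (x ^ ℓ ^ k - 1) ℓ).mpr hy
        push_cast at h0
        linear_combination h0
      apply (ZMod.intCast_zmod_eq_zero_iff_dvd _ ℓ).mp
      push_cast
      simp [hz, CharP.cast_eq_zero]
    have key : (ℓ : ℤ) ^ (k + 2) ∣ (∑ j ∈ range ℓ, (x ^ ℓ ^ k) ^ j) * (x ^ ℓ ^ k - 1) := by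
      have h2 : (ℓ : ℤ) ^ (k + 2) = (ℓ : ℤ) * (ℓ : ℤ) ^ (k + 1) := by ring
      rw [h2]
      exact mul_dvd_mul hsum ih
    rw [geom_sum_mul] at key
    have h3 : (x ^ ℓ ^ k) ^ ℓ = x ^ ℓ ^ (k + 1) := by
      rw [← pow_mul, ← pow_succ]
    rwa [h3] at key

private lemma ell_dvd_sum (ℓ a k : ℕ) (hℓ : ℓ.Prime) (hmod : a ≡ 1 [MOD ℓ]) :
    ℓ ∣ ∑ j ∈ range ℓ, a ^ (ℓ ^ k * j) := by
  haveI : NeZero ℓ := ⟨hℓ.ne_zero⟩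
  have h1 : (a : ZMod ℓ) = 1 := by
    have := (ZMod.natCast_eq_natCast_iff a 1 ℓ).mpr hmod
    simpa using this
  apply (ZMod.natCast_eq_zero_iff _ _).mp
  rw [sum_cast_eq ℓ a k ℓ (by simp [h1])]
  exact ZMod.natCast_self ℓ

private lemma not_sq_dvd (ℓ a k : ℕ) (hℓ : ℓ.Prime) (hk : 0 < k) (hmod : a ≡ 1 [MOD ℓ]) :
    ¬ ℓ ^ 2 ∣ ∑ j ∈ range ℓ, a ^ (ℓ ^ k * j) := by
  haveI : NeZero (ℓ ^ 2) := ⟨pow_ne_zero _ hℓ.ne_zero⟩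
  intro h
  have hd : (ℓ : ℤ) ∣ (a : ℤ) - 1 := dvd_sub_comm.mp hmod.dvd
  have hdvdZ : ((ℓ ^ 2 : ℕ) : ℤ) ∣ (a : ℤ) ^ ℓ ^ k - 1 := by
    have h1 := lift_dvd ℓ (a : ℤ) hd k
    push_cast
    exact dvd_trans (pow_dvd_pow _ (by omega : 2 ≤ k + 1)) h1
  have hx : ((a : ZMod (ℓ ^ 2))) ^ ℓ ^ k = 1 := by
    have h0 := (ZMod.intCast_zmod_eq_zero_iff_dvd ((a : ℤ) ^ ℓ ^ k - 1) (ℓ ^ 2)).mpr hdvdZ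
    push_cast at h0
    linear_combination h0
  have heq := sum_cast_eq ℓ a k (ℓ ^ 2) hx
  rw [(ZMod.natCast_eq_zero_iff _ _).mpr h] at heq
  have hdl : ℓ ^ 2 ∣ ℓ := (ZMod.natCast_eq_zero_iff ℓ (ℓ ^ 2)).mp heq.symm
  have := Nat.le_of_dvd hℓ.pos hdl
  nlinarith [hℓ.two_le]

private lemma ord_lemma (ℓ a k p : ℕ) (hℓ : ℓ.Prime) (hp : p.Prime) (hpl : p ≠ ℓ)
    (hdvd : p ∣ ∑ j ∈ range ℓ, a ^ (ℓ ^ k * j)) :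
    orderOf (a : ZMod p) = ℓ ^ (k + 1) ∧ ℓ ^ (k + 1) ∣ p - 1 := by
  haveI : Fact p.Prime := ⟨hp⟩
  have hS : ((∑ j ∈ range ℓ, a ^ (ℓ ^ k * j) : ℕ) : ZMod p) = 0 :=
    (ZMod.natCast_eq_zero_iff _ _).mpr hdvd
  have hne : ((a : ZMod p)) ^ ℓ ^ k ≠ 1 := by
    intro h
    have h1 := sum_cast_eq ℓ a k p h
    rw [hS] at h1
    have h2 : p ∣ ℓ := (ZMod.natCast_eq_zero_iff ℓ p).mp h1.symm
    exact hpl ((Nat.prime_dvd_prime_iff_eq hp hℓ).mp h2)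
  have hone : ((a : ZMod p)) ^ ℓ ^ (k + 1) = 1 := by
    have hgeom : (∑ j ∈ range ℓ, ((a : ZMod p) ^ ℓ ^ k) ^ j) * ((a : ZMod p) ^ ℓ ^ k - 1)
        = (a : ZMod p) ^ ℓ ^ (k + 1) - 1 := by
      rw [geom_sum_mul, ← pow_mul, ← pow_succ]
    have hSz : (∑ j ∈ range ℓ, ((a : ZMod p) ^ ℓ ^ k) ^ j) = 0 := by
      rw [← hS]; push_cast; simp [pow_mul]
    rw [hSz, zero_mul] at hgeom
    exact sub_eq_zero.mp hgeom.symm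
  have hd1 : orderOf (a : ZMod p) ∣ ℓ ^ (k + 1) := orderOf_dvd_of_pow_eq_one hone
  have hd2 : ¬ orderOf (a : ZMod p) ∣ ℓ ^ k := fun h => hne (orderOf_dvd_iff_pow_eq_one.mp h)
  obtain ⟨m, hm, hordeq⟩ := (Nat.dvd_prime_pow hℓ).mp hd1
  have hmk : m = k + 1 := by
    by_contra hmk
    exact hd2 (hordeq ▸ pow_dvd_pow ℓ (by omega))
  have hord : orderOf (a : ZMod p) = ℓ ^ (k + 1) := by rw [hordeq, hmk]
  refine ⟨hord, ?_⟩
  have ha0 : (a : ZMod p) ≠ 0 := by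
    intro h0
    rw [h0, zero_pow (pow_ne_zero _ hℓ.ne_zero)] at hone
    exact zero_ne_one hone
  have := orderOf_dvd_of_pow_eq_one (ZMod.pow_card_sub_one_eq_one ha0)
  rwa [hord] at this

open Finset in
theorem stmt_0 (ℓ a b c : ℕ) (hℓ : ℓ.Prime) (ha : 0 < a) (hb : 0 < b) (hc : 0 < c)
    (hbc : b < c) (hmod : a ≡ 1 [MOD ℓ]) :
    (∀ p : ℕ, p.Prime → p ∣ (∑ j ∈ Finset.range ℓ, a ^ (ℓ ^ b * j)) / ℓ →
      p > ℓ ^ (b + 1)) ∧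
    Nat.gcd (∑ j ∈ Finset.range ℓ, a ^ (ℓ ^ b * j))
      (∑ j ∈ Finset.range ℓ, a ^ (ℓ ^ c * j)) = ℓ ∧
    Nat.Coprime ((∑ j ∈ Finset.range ℓ, a ^ (ℓ ^ b * j)) / ℓ)
      ((∑ j ∈ Finset.range ℓ, a ^ (ℓ ^ c * j)) / ℓ) := by
  set Sb := ∑ j ∈ Finset.range ℓ, a ^ (ℓ ^ b * j) with hSb
  set Sc := ∑ j ∈ Finset.range ℓ, a ^ (ℓ ^ c * j) with hSc
  have hdb : ℓ ∣ Sb := ell_dvd_sum ℓ a b hℓ hmod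
  have hdc : ℓ ∣ Sc := ell_dvd_sum ℓ a c hℓ hmod
  have hnsb : ¬ ℓ ^ 2 ∣ Sb := not_sq_dvd ℓ a b hℓ hb hmod
  have hnsc : ¬ ℓ ^ 2 ∣ Sc := not_sq_dvd ℓ a c hℓ hc hmod
  -- from p prime, p ∣ S_k / ℓ : p ≠ ℓ and p ∣ S_k
  have key : ∀ k : ℕ, ℓ ∣ (∑ j ∈ Finset.range ℓ, a ^ (ℓ ^ k * j)) →
      ¬ ℓ ^ 2 ∣ (∑ j ∈ Finset.range ℓ, a ^ (ℓ ^ k * j)) →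
      ∀ p : ℕ, p.Prime → p ∣ (∑ j ∈ Finset.range ℓ, a ^ (ℓ ^ k * j)) / ℓ →
      p ≠ ℓ ∧ p ∣ (∑ j ∈ Finset.range ℓ, a ^ (ℓ ^ k * j)) := by
    intro k hdk hnsk p hp hpd
    have hpne : p ≠ ℓ := by
      rintro rfl
      apply hnsk
      have := Nat.mul_dvd_mul_left p hpd
      rw [pow_two]
      rwa [Nat.mul_div_cancel' hdk] at this
    exact ⟨hpne, dvd_trans hpd (Nat.div_dvd_of_dvd hdk)⟩
  have part1 : ∀ p : ℕ, p.Prime → p ∣ Sb / ℓ → p > ℓ ^ (b + 1) := by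
    intro p hp hpd
    obtain ⟨hpne, hpS⟩ := key b hdb hnsb p hp hpd
    obtain ⟨-, hdvd⟩ := ord_lemma ℓ a b p hℓ hp hpne hpS
    have h2 := hp.two_le
    have h1 : ℓ ^ (b + 1) ≤ p - 1 := Nat.le_of_dvd (by omega) hdvd
    omega
  have hgcd : Nat.gcd Sb Sc = ℓ := by
    set g := Nat.gcd Sb Sc with hg
    have hgd : ℓ ∣ g := Nat.dvd_gcd hdb hdc
    have hgb : g ∣ Sb := Nat.gcd_dvd_left _ _
    have hgc : g ∣ Sc := Nat.gcd_dvd_right _ _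
    have ht1 : g / ℓ = 1 := by
      by_contra hne
      obtain ⟨p, hp, hpd⟩ := Nat.exists_prime_and_dvd hne
      have hlp : ℓ * p ∣ g := by
        have h2 : ℓ * p ∣ ℓ * (g / ℓ) := Nat.mul_dvd_mul_left ℓ hpd
        rwa [Nat.mul_div_cancel' hgd] at h2
      have hpSb : p ∣ Sb / ℓ := by
        have h3 : ℓ * p ∣ ℓ * (Sb / ℓ) := by
          rw [Nat.mul_div_cancel' hdb]; exact dvd_trans hlp hgb
        exact (Nat.mul_dvd_mul_iff_left hℓ.pos).mp h3
      obtain ⟨hpne, hpb⟩ := key b hdb hnsb p hp hpSb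
      have hpc : p ∣ Sc := dvd_trans (dvd_trans (Dvd.intro_left ℓ rfl) hlp) hgc
      obtain ⟨hob, -⟩ := ord_lemma ℓ a b p hℓ hp hpne hpb
      obtain ⟨hoc, -⟩ := ord_lemma ℓ a c p hℓ hp hpne hpc
      have : (b + 1) = (c + 1) :=
        Nat.pow_right_injective hℓ.two_le (hob.symm.trans hoc)
      omega
    have : g = ℓ * (g / ℓ) := (Nat.mul_div_cancel' hgd).symm
    rw [ht1, mul_one] at this
    exact this
  refine ⟨part1, hgcd, ?_⟩
  have hdl : Nat.gcd (Sb / ℓ) (Sc / ℓ) ∣ ℓ := by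
    have h1 : Nat.gcd (Sb / ℓ) (Sc / ℓ) ∣ Nat.gcd Sb Sc := Nat.dvd_gcd
      (dvd_trans (Nat.gcd_dvd_left _ _) (Nat.div_dvd_of_dvd hdb))
      (dvd_trans (Nat.gcd_dvd_right _ _) (Nat.div_dvd_of_dvd hdc))
    rwa [hgcd] at h1
  rcases hℓ.eq_one_or_self_of_dvd _ hdl with h1 | h1
  · exact h1
  · exfalso
    apply hnsb
    have h2 : ℓ ∣ Sb / ℓ := by
      have h4 := Nat.gcd_dvd_left (Sb / ℓ) (Sc / ℓ)
      rwa [h1] at h4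
    have h3 := Nat.mul_dvd_mul_left ℓ h2
    rwa [Nat.mul_div_cancel' hdb, ← pow_two] at h3
end

section
/- Let n ≥ 1 be an integer, let t ∈ Ω lie in GF(2, 2·3^(n-1)), and let u ∈ Ω be nonzero such that u³ lies in GF(2, 2·3^(n-1)) and (u³)² + t·u³ + 1 = 0. Then y := u + u⁻¹ lies in GF(2, 2·3^n), satisfies y³ + y + t = 0, and y lies in GF(2, 2·3^(n-1)) if and only if u lies in GF(2, 2·3^(n-1)). -/
noncomputable abbrev Ω : Type := AlgebraicClosure (ZMod 2)

theorem stmt_2 (n : ℕ) (hn : 1 ≤ n) (t u : Ω)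
    (ht : t ^ (2 ^ (2 * 3 ^ (n - 1))) = t)
    (hu : u ≠ 0)
    (hu3 : (u ^ 3) ^ (2 ^ (2 * 3 ^ (n - 1))) = u ^ 3)
    (hquad : (u ^ 3) ^ 2 + t * u ^ 3 + 1 = 0) :
    (u + u⁻¹) ^ (2 ^ (2 * 3 ^ n)) = u + u⁻¹ ∧
    (u + u⁻¹) ^ 3 + (u + u⁻¹) + t = 0 ∧
    ((u + u⁻¹) ^ (2 ^ (2 * 3 ^ (n - 1))) = u + u⁻¹ ↔
      u ^ (2 ^ (2 * 3 ^ (n - 1))) = u) := by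
  have h2 : (2 : Ω) = 0 := by
    have := CharP.cast_eq_zero Ω 2
    exact_mod_cast this
  set m := 2 * 3 ^ (n - 1) with hm
  set q := 2 ^ m with hqdef
  -- q ≡ 1 mod 3
  have hmod : q % 3 = 1 := by
    have : q = 4 ^ (3 ^ (n - 1)) := by
      rw [hqdef, hm, pow_mul]; norm_num
    rw [this, Nat.pow_mod]
    simp
  obtain ⟨s, hs⟩ : ∃ s, q = 3 * s + 1 := ⟨q / 3, by omega⟩
  have hu3ne : u ^ 3 ≠ 0 := pow_ne_zero 3 hu
  obtain ⟨ζ, hζ⟩ : ∃ z : Ω, u ^ q * u⁻¹ = z := ⟨_, rfl⟩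
  have huq : u ^ q = ζ * u := by
    rw [← hζ]; field_simp
  have hζ3 : ζ ^ 3 = 1 := by
    rw [← hζ, mul_pow, ← pow_mul, mul_comm q 3, pow_mul, hu3, inv_pow]
    field_simp
  have hζne : ζ ≠ 0 := by
    intro h; rw [h] at hζ3; simp at hζ3
  have hζq : ζ ^ q = ζ := by
    rw [hs, pow_add, pow_mul, hζ3, one_pow, pow_one, one_mul]
  have hq3 : 2 ^ (2 * 3 ^ n) = q ^ 3 := by
    rw [hqdef, ← pow_mul, hm]
    congr 1
    have h3 : 3 ^ n = 3 ^ (n - 1) * 3 := by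
      rw [← pow_succ]; congr 1; omega
    rw [h3]; ring
  have huq3 : u ^ q ^ 3 = u := by
    have h1 : u ^ q ^ 3 = ((u ^ q) ^ q) ^ q := by
      rw [show q ^ 3 = q * q * q from by ring, pow_mul, pow_mul]
    rw [h1, huq, mul_pow, hζq, huq, mul_pow, hζq, mul_pow, hζq, huq,
      show ζ * (ζ * (ζ * u)) = ζ ^ 3 * u by ring, hζ3, one_mul]
  -- Part 1
  have part1 : (u + u⁻¹) ^ (2 ^ (2 * 3 ^ n)) = u + u⁻¹ := by
    rw [hq3, show q ^ 3 = 2 ^ (m * 3) by rw [hqdef, ← pow_mul],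
      add_pow_char_pow, show (2:ℕ) ^ (m * 3) = q ^ 3 by rw [hqdef, pow_mul],
      inv_pow, huq3]
  -- Part 2
  have hinvm : u * u⁻¹ = 1 := mul_inv_cancel₀ hu
  have ht3 : u ^ 3 + (u⁻¹) ^ 3 = t := by
    rw [inv_pow]
    field_simp
    linear_combination hquad - t * u ^ 3 * h2
  have part2 : (u + u⁻¹) ^ 3 + (u + u⁻¹) + t = 0 := by
    linear_combination (3*u + 3*u⁻¹) * hinvm + (u^3 + u⁻¹^3 + 2*u + 2*u⁻¹) * h2 - ht3
  refine ⟨part1, part2, ?_, ?_⟩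
  · -- forward
    intro h
    have hinv : (u⁻¹) ^ q = (u ^ q)⁻¹ := by rw [inv_pow]
    have hadd : (u + u⁻¹) ^ q = u ^ q + (u⁻¹) ^ q := by
      rw [hqdef, add_pow_char_pow]
    rw [hadd, hinv, huq] at h
    by_cases hζ1 : ζ = 1
    · rw [huq, hζ1, one_mul]
    · have hζ1' : ζ - 1 ≠ 0 := sub_ne_zero.mpr hζ1
      have hzu : ζ * u ≠ 0 := mul_ne_zero hζne hu
      field_simp at h
      have hkey : (ζ - 1) * (ζ * u ^ 2 - 1) * u = 0 := by linear_combination u * h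
      have hzu2 : ζ * u ^ 2 = 1 := by
        rcases mul_eq_zero.mp hkey with h' | h'
        · rcases mul_eq_zero.mp h' with h'' | h''
          · exact absurd h'' hζ1'
          · linear_combination h''
        · exact absurd h' hu
      have hu6 : u ^ 6 = 1 := by
        linear_combination (ζ^2*u^4 + ζ*u^2 + 1) * hzu2 - u^6 * hζ3
      have hu3one : u ^ 3 = 1 := by
        have hsq : (u ^ 3 - 1) ^ 2 = 0 := by
          linear_combination hu6 + (1 - u^3) * h2
        have h0 := pow_eq_zero_iff (n := 2) (by norm_num) |>.mp hsq
        linear_combination h0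
      rw [hs, pow_add, pow_mul, hu3one, one_pow, pow_one, one_mul]
  · -- reverse
    intro h
    have hadd : (u + u⁻¹) ^ (2 ^ m) = u ^ (2 ^ m) + (u⁻¹) ^ (2 ^ m) :=
      add_pow_char_pow u u⁻¹ 2 m
    rw [hqdef, hadd, inv_pow, ← hqdef, h]
end

section
/- For integers m ≥ 1 and 0 ≤ i < m and z ∈ Ω, define N_{m,i}(z) := z^(∏_{t=1}^{i} (q^(2^(m-t)) + 1)), with N_{m,0}(z) = z; this is the norm map from GF(q,2^m) to GF(q,2^(m-i)). Let n ≥ 2 and 1 ≤ j < n be integers and let x : ℕ → Ω be such that, for every k ≥ 1, x k is nonzero and lies in GF(q, 2^k). Then N_{n,j}(x n) / x(n-j) = ∏_{k=1}^{j} N_{n-k, j-k}( N_{n-k+1,1}(x(n-k+1)) / x(n-k) ). Moreover, if for every k with 2 ≤ k ≤ n there exists y ∈ Ω lying in GF(q, 2^(k-1)) with y²·x(k-1) = N_{k,1}(x k), then N_{n,j}(x n) / x(n-j) is a square in GF(q, 2^(n-j)). -/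
/-- `z` lies in the subfield `GF(q, m)` of the algebraic closure of `ZMod q`. -/
def LiesIn (q : ℕ) [Fact q.Prime] (m : ℕ) (z : AlgebraicClosure (ZMod q)) : Prop :=
  z ^ (q ^ m) = z

/-- `z` is a square in the subfield `GF(q, m)`. -/
def IsSqIn (q : ℕ) [Fact q.Prime] (m : ℕ) (z : AlgebraicClosure (ZMod q)) : Prop :=
  ∃ y : AlgebraicClosure (ZMod q), y ^ (q ^ m) = y ∧ y ^ 2 = z

/-- The norm map from `GF(q, 2^m)` down to `GF(q, 2^(m-i))`:
`N_{m,i}(z) = z ^ (∏_{t=1}^{i} (q^(2^(m-t)) + 1))`. -/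
noncomputable def Nrm (q : ℕ) [Fact q.Prime] (m i : ℕ)
    (z : AlgebraicClosure (ZMod q)) : AlgebraicClosure (ZMod q) :=
  z ^ (∏ t ∈ Finset.Icc 1 i, (q ^ 2 ^ (m - t) + 1))

section Helpers

set_option linter.unusedSectionVars false

variable (q : ℕ) [Fact q.Prime]

lemma nrm_zero (m : ℕ) (z : AlgebraicClosure (ZMod q)) : Nrm q m 0 z = z := by
  simp [Nrm]

lemma nrm_one' (m : ℕ) (z : AlgebraicClosure (ZMod q)) :
    Nrm q (m+1) 1 z = z ^ (q ^ 2 ^ m + 1) := by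
  simp [Nrm]

lemma exp_rec (m i : ℕ) :
    ∏ t ∈ Finset.Icc 1 (i+1), (q ^ 2 ^ (m + 1 - t) + 1)
      = (q ^ 2 ^ m + 1) * ∏ t ∈ Finset.Icc 1 i, (q ^ 2 ^ (m - t) + 1) := by
  rw [← Finset.Ico_add_one_right_eq_Icc, ← Finset.Ico_add_one_right_eq_Icc, Finset.prod_Ico_eq_prod_range,
    Finset.prod_Ico_eq_prod_range]
  simp only [Nat.add_sub_cancel]
  rw [Finset.prod_range_succ', mul_comm]
  congr 1
  apply Finset.prod_congr rfl
  intro r _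
  congr 3
  omega

lemma nrm_rec (m i : ℕ) (z : AlgebraicClosure (ZMod q)) :
    Nrm q (m+1) (i+1) z = Nrm q m i (Nrm q (m+1) 1 z) := by
  rw [nrm_one', Nrm, Nrm, exp_rec, mul_comm, pow_mul, pow_right_comm]

lemma nrm_fixed (m i : ℕ) (h : i ≤ m) (y : AlgebraicClosure (ZMod q))
    (hy : y ^ q ^ 2 ^ m = y) :
    (Nrm q m i y) ^ q ^ 2 ^ (m - i) = Nrm q m i y := by
  induction i with
  | zero => simpa [nrm_zero] using hy
  | succ i ih =>
    have hi : i ≤ m := by omega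
    have hw := ih hi
    set w := Nrm q m i y with hwdef
    have hstep : Nrm q m (i+1) y = w ^ (q ^ 2 ^ (m - (i+1)) + 1) := by
      rw [Nrm, Finset.prod_Icc_succ_top (by omega), pow_mul, hwdef, Nrm]
    set a := q ^ 2 ^ (m - (i+1)) with hadef
    have haa : a * a = q ^ 2 ^ (m - i) := by
      rw [hadef, ← pow_add]
      congr 1
      have : m - i = (m - (i+1)) + 1 := by omega
      rw [this, pow_succ]
      ring
    rw [hstep, ← pow_mul]
    calc w ^ ((a + 1) * a) = w ^ (a * a) * w ^ a := by
          rw [← pow_add]; congr 1; ring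
    _ = w ^ a * w := by rw [haa, hw, mul_comm]
    _ = w ^ (a + 1) := by rw [pow_succ]

lemma telescope (j : ℕ) (f : ℕ → AlgebraicClosure (ZMod q)) (hf : ∀ k ≤ j, f k ≠ 0) :
    ∏ k ∈ Finset.Icc 1 j, (f (k-1) / f k) = f 0 / f j := by
  induction j with
  | zero => simp [div_self (hf 0 le_rfl)]
  | succ j ih =>
    rw [Finset.prod_Icc_succ_top (by omega), ih (fun k hk => hf k (by omega))]
    have h1 : f j ≠ 0 := hf j (by omega)
    field_simp
    simp only [Nat.add_sub_cancel]

lemma isSqIn_prod (M : ℕ) (s : Finset ℕ) (g : ℕ → AlgebraicClosure (ZMod q))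
    (h : ∀ k ∈ s, IsSqIn q M (g k)) : IsSqIn q M (∏ k ∈ s, g k) := by
  classical
  refine Finset.prod_induction g (IsSqIn q M) ?_ ?_ h
  · rintro a b ⟨ya, ha1, ha2⟩ ⟨yb, hb1, hb2⟩
    exact ⟨ya * yb, by rw [mul_pow, ha1, hb1], by rw [mul_pow, ha2, hb2]⟩
  · exact ⟨1, one_pow _, one_pow _⟩

end Helpers

theorem stmt_4 (q : ℕ) [Fact q.Prime] (hodd : q ≠ 2)
    (n j : ℕ) (hn : 2 ≤ n) (hj1 : 1 ≤ j) (hjn : j < n)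
    (x : ℕ → AlgebraicClosure (ZMod q))
    (hx : ∀ k, 1 ≤ k → x k ≠ 0 ∧ LiesIn q (2 ^ k) (x k)) :
    Nrm q n j (x n) / x (n - j) =
      ∏ k ∈ Finset.Icc 1 j,
        Nrm q (n - k) (j - k) (Nrm q (n - k + 1) 1 (x (n - k + 1)) / x (n - k)) ∧
    ((∀ k, 2 ≤ k → k ≤ n → ∃ y : AlgebraicClosure (ZMod q),
        LiesIn q (2 ^ (k - 1)) y ∧ y ^ 2 * x (k - 1) = Nrm q k 1 (x k)) →
      IsSqIn q (2 ^ (n - j)) (Nrm q n j (x n) / x (n - j))) := by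
  have hxne : ∀ k, 1 ≤ k → x k ≠ 0 := fun k hk => (hx k hk).1
  have hfne : ∀ k ≤ j, (fun k => Nrm q (n-k) (j-k) (x (n-k))) k ≠ 0 := by
    intro k hk
    exact pow_ne_zero _ (hxne (n-k) (by omega))
  have hterm : ∀ k ∈ Finset.Icc 1 j,
      Nrm q (n-k) (j-k) (Nrm q (n-k+1) 1 (x (n-k+1)) / x (n-k)) =
        Nrm q (n-(k-1)) (j-(k-1)) (x (n-(k-1))) / Nrm q (n-k) (j-k) (x (n-k)) := by
    intro k hk
    simp only [Finset.mem_Icc] at hk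
    have h1 : n - (k-1) = (n-k) + 1 := by omega
    have h2 : j - (k-1) = (j-k) + 1 := by omega
    rw [h1, h2]
    conv_rhs => rw [nrm_rec]
    simp only [Nrm, div_pow]
  have hmain : Nrm q n j (x n) / x (n - j) =
      ∏ k ∈ Finset.Icc 1 j,
        Nrm q (n - k) (j - k) (Nrm q (n - k + 1) 1 (x (n - k + 1)) / x (n - k)) := by
    rw [Finset.prod_congr rfl hterm,
      telescope q j (fun k => Nrm q (n-k) (j-k) (x (n-k))) hfne]
    simp only [Nat.sub_zero, Nat.sub_self, nrm_zero]
  refine ⟨hmain, fun h => ?_⟩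
  rw [hmain]
  apply isSqIn_prod
  intro k hk
  simp only [Finset.mem_Icc] at hk
  obtain ⟨y, hy1, hy2⟩ := h (n-k+1) (by omega) (by omega)
  have e1 : n - k + 1 - 1 = n - k := by omega
  rw [e1] at hy1 hy2
  have hxk : x (n-k) ≠ 0 := hxne _ (by omega)
  have key : Nrm q (n-k+1) 1 (x (n-k+1)) / x (n-k) = y ^ 2 := by
    rw [← hy2, mul_div_cancel_right₀ _ hxk]
  rw [key]
  refine ⟨Nrm q (n-k) (j-k) y, ?_, ?_⟩
  · unfold LiesIn at hy1
    have hfix := nrm_fixed q (n-k) (j-k) (by omega) y hy1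
    have e2 : (n-k) - (j-k) = n - j := by omega
    rwa [e2] at hfix
  · rw [Nrm, Nrm, pow_right_comm]
end

section
/- Let q be an odd prime and let c ∈ ZMod q be nonzero. Then there exists an element x₁ of F := GaloisField q 2 such that x₁ is not a square in F and x₁ + algebraMap (ZMod q) F c is not a square in F, i.e. ¬IsSquare x₁ and ¬IsSquare (x₁ + algebraMap (ZMod q) F c). -/
open Finset

private lemma aux_mul_nonsquare {F : Type*} [Field F] [Fintype F] [DecidableEq F]
    (hF : ringChar F ≠ 2) {a b : F} (ha : ¬IsSquare a) (hb : ¬IsSquare b) :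
    IsSquare (a * b) := by
  have ha' : quadraticChar F a = -1 := quadraticChar_neg_one_iff_not_isSquare.mpr ha
  have hb' : quadraticChar F b = -1 := quadraticChar_neg_one_iff_not_isSquare.mpr hb
  have ha0 : a ≠ 0 := fun h => ha (h ▸ IsSquare.zero)
  have hb0 : b ≠ 0 := fun h => hb (h ▸ IsSquare.zero)
  have : quadraticChar F (a * b) = 1 := by
    rw [map_mul, ha', hb']; ring
  exact (quadraticChar_one_iff_isSquare (mul_ne_zero ha0 hb0)).mp this

private lemma aux_exists_consec {F : Type*} [Field F] [Fintype F] [DecidableEq F]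
    (hF : ringChar F ≠ 2) (hneg : IsSquare (-1 : F)) :
    ∃ z : F, ¬IsSquare z ∧ ¬IsSquare (z + 1) := by
  by_contra h
  push_neg at h
  obtain ⟨u, hu⟩ := FiniteField.exists_nonsquare hF
  have hu0 : u ≠ 0 := fun h => hu (h ▸ IsSquare.zero)
  set N : Finset F := univ.filter (fun a => ¬IsSquare a) with hN
  set S : Finset F := univ.filter (fun a => IsSquare a ∧ a ≠ 0) with hS
  -- card N = card S via multiplication by u
  have h1 : N.card ≤ S.card := by
    apply Finset.card_le_card_of_injOn (fun z => u * z)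
    · intro z hz
      simp only [hN, hS, mem_coe, mem_filter, mem_univ, true_and] at hz ⊢
      have hz0 : z ≠ 0 := fun h => hz (h ▸ IsSquare.zero)
      exact ⟨aux_mul_nonsquare hF hu hz, mul_ne_zero hu0 hz0⟩
    · intro a _ b _ hab
      exact mul_left_cancel₀ hu0 hab
  have h2 : S.card ≤ N.card := by
    apply Finset.card_le_card_of_injOn (fun z => u * z)
    · intro z hz
      simp only [hN, hS, mem_coe, mem_filter, mem_univ, true_and] at hz ⊢
      intro hsq
      apply hu
      obtain ⟨w, hw⟩ := hz.1
      obtain ⟨v, hv⟩ := hsq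
      have hw0 : w ≠ 0 := by
        intro h0; exact hz.2 (by rw [hw, h0, mul_zero])
      refine ⟨v * w⁻¹, ?_⟩
      field_simp
      rw [sq, sq, ← hv, hw]
      try ring
    · intro a _ b _ hab
      exact mul_left_cancel₀ hu0 hab
  -- the map z ↦ z + 1 sends N injectively into S
  have hmem : ∀ z ∈ N, z + 1 ∈ S := by
    intro z hz
    simp only [hN, hS, mem_filter, mem_univ, true_and] at hz ⊢
    refine ⟨h z hz, ?_⟩
    intro h0
    have : z = -1 := by linear_combination h0
    exact hz (this ▸ hneg)
  have hinj : ∀ (a₁ a₂ : F), a₁ ∈ N → a₂ ∈ N → a₁ + 1 = a₂ + 1 → a₁ = a₂ := by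
    intro a b _ _ hab; linear_combination hab
  have hsurj := Finset.surj_on_of_inj_on_of_card_le (s := N) (t := S)
    (fun z _ => z + 1) hmem hinj h2
  have h1S : (1 : F) ∈ S := by
    simp only [hS, mem_filter, mem_univ, true_and]
    exact ⟨IsSquare.one, one_ne_zero⟩
  obtain ⟨z, hz, hz1⟩ := hsurj 1 h1S
  have hz0 : z = 0 := by linear_combination - hz1
  simp only [hN, mem_filter, mem_univ, true_and] at hz
  exact hz (hz0 ▸ IsSquare.zero)

theorem stmt_9 (q : ℕ) [Fact q.Prime] (hodd : q ≠ 2)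
    (c : ZMod q) (hc : c ≠ 0) :
    ∃ x₁ : GaloisField q 2, ¬ IsSquare x₁ ∧
      ¬ IsSquare (x₁ + algebraMap (ZMod q) (GaloisField q 2) c) := by
  classical
  set F := GaloisField q 2
  haveI : Fintype F := Fintype.ofFinite F
  have hq : q.Prime := Fact.out
  have hqodd : q % 2 = 1 := by
    rcases hq.eq_two_or_odd with h | h
    · exact absurd h hodd
    · exact h
  have hchar : ringChar F = q := by
    rw [ringChar.eq F q]
  have hF2 : ringChar F ≠ 2 := by rw [hchar]; exact hodd
  have hcard : Fintype.card F = q ^ 2 := by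
    rw [← Nat.card_eq_fintype_card]
    exact GaloisField.card q 2 (by norm_num)
  -- every nonzero element of the prime field is a square in F
  have hprime_sq : ∀ a : ZMod q, a ≠ 0 → IsSquare (algebraMap (ZMod q) F a) := by
    intro a ha
    have ha' : algebraMap (ZMod q) F a ≠ 0 := by
      simp only [ne_eq, map_eq_zero]; exact ha
    rw [FiniteField.isSquare_iff hF2 ha']
    obtain ⟨k, hk⟩ : ∃ k, q = 2 * k + 1 := ⟨q / 2, by omega⟩
    have hdiv : Fintype.card F / 2 = (q - 1) * ((q + 1) / 2) := by
      rw [hcard, hk]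
      have e1 : (2 * k + 1) ^ 2 / 2 = 2 * k * (k + 1) := by
        have : (2 * k + 1) ^ 2 = 2 * (2 * k * (k + 1)) + 1 := by ring
        omega
      have e2 : 2 * k + 1 - 1 = 2 * k := by omega
      have e3 : (2 * k + 1 + 1) / 2 = k + 1 := by omega
      rw [e1, e2, e3]
    rw [hdiv, pow_mul, ← map_pow, ZMod.pow_card_sub_one_eq_one ha, map_one, one_pow]
  -- -1 is a square in F
  have hneg : IsSquare (-1 : F) := by
    have : ((-1 : ZMod q) : ZMod q) ≠ 0 := by
      intro h
      have : (1 : ZMod q) = 0 := by linear_combination -h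
      exact one_ne_zero this
    have := hprime_sq (-1) this
    rwa [map_neg, map_one] at this
  obtain ⟨z, hz, hz1⟩ := aux_exists_consec (F := F) hF2 hneg
  -- c maps to a nonzero square y * y
  obtain ⟨y, hy⟩ := hprime_sq c hc
  have hy0 : y ≠ 0 := by
    intro h0
    apply hc
    have : algebraMap (ZMod q) F c = 0 := by rw [hy, h0, mul_zero]
    simpa using this
  refine ⟨y * y * z, ?_, ?_⟩
  · intro ⟨w, hw⟩
    apply hz
    refine ⟨w * y⁻¹, ?_⟩
    field_simp
    rw [div_mul_div_comm, eq_div_iff (mul_ne_zero hy0 hy0), ← hw]; ring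
  · rw [hy]
    intro hsq
    apply hz1
    have : y * y * z + y * y = y * y * (z + 1) := by ring
    rw [this] at hsq
    obtain ⟨w, hw⟩ := hsq
    refine ⟨w * y⁻¹, ?_⟩
    field_simp
    rw [div_mul_div_comm, eq_div_iff (mul_ne_zero hy0 hy0), ← hw]; ring
end

section
/- Let q be an odd prime. Then there exists a sequence x : ℕ → Ω such that: x 1 lies in GF(q,2); for every n ≥ 2, (x n)² + (x n) = 2⁻¹ · x(n-1) (inverses taken in Ω, where 2 ≠ 0 since q is odd); for every n ≥ 1, x n lies in GF(q, 2^n); for every n ≥ 2, x n does not lie in GF(q, 2^(n-1)) (so the polynomial f₃(x_{n-1}, x_n) = x_n² + x_n − x_{n-1}/2 defines an infinite tower of fields); and for every n ≥ 2, orderOf (x n) > 2^((n² + 3n)/2 + ν₂(q−1) − 2), where ν₂(q−1) = padicValNat 2 (q−1). -/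
set_option maxHeartbeats 1000000

private lemma aux_odd_sq_mod8 {o : ℕ} (ho : Odd o) : o ^ 2 % 8 = 1 := by
  obtain ⟨t, rfl⟩ := ho
  obtain ⟨v, hv⟩ : Even (t * (t + 1)) := Nat.even_mul_succ_self t
  have h : (2 * t + 1) ^ 2 = 4 * (t * (t + 1)) + 1 := by ring
  omega

private lemma aux_two_pow_dvd {d M k : ℕ} (h1 : d ∣ 2 * M) (h2 : ¬ d ∣ M)
    (h3 : 2 ^ k ∣ 2 * M) : 2 ^ k ∣ d := by
  obtain ⟨t, ht⟩ := h1
  have hto : ¬ 2 ∣ t := by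
    rintro ⟨u, rfl⟩
    refine h2 ⟨u, ?_⟩
    have h2M : 2 * M = 2 * (d * u) := by rw [ht]; ring
    exact Nat.eq_of_mul_eq_mul_left (by norm_num) h2M
  have hcop : Nat.Coprime (2 ^ k) t :=
    Nat.Coprime.pow_left k ((Nat.prime_two.coprime_iff_not_dvd).mpr hto)
  exact hcop.dvd_of_dvd_mul_right (ht ▸ h3)

private lemma aux_pow2_or_oddprime {m : ℕ} (hm : m ≠ 0) :
    (∃ p, p.Prime ∧ p ≠ 2 ∧ p ∣ m) ∨ ∃ k, m = 2 ^ k := by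
  obtain ⟨k, u, hu, rfl⟩ := Nat.exists_eq_two_pow_mul_odd hm
  rcases eq_or_ne u 1 with rfl | hu1
  · exact Or.inr ⟨k, by simp⟩
  · left
    refine ⟨u.minFac, Nat.minFac_prime hu1, ?_, Dvd.dvd.mul_left (Nat.minFac_dvd u) _⟩
    intro h2
    have h2u : 2 ∣ u := h2 ▸ Nat.minFac_dvd u
    have := Nat.odd_iff.mp hu
    omega

private lemma aux_prime_bound {q p j : ℕ} (hp : p.Prime) (hp2 : p ≠ 2)
    (hdvd : p ∣ q ^ 2 ^ j + 1) : 2 ^ (j + 1) + 1 ≤ p := by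
  haveI : Fact p.Prime := ⟨hp⟩
  have hq0 : ¬ p ∣ q := by
    intro h
    have h1 : p ∣ q ^ 2 ^ j := dvd_pow h (Nat.two_pow_pos j).ne'
    have h2 : p ∣ 1 := (Nat.dvd_add_right h1).mp hdvd
    have := Nat.dvd_one.mp h2
    exact hp.one_lt.ne' this
  have hρ0 : (q : ZMod p) ≠ 0 := by
    rwa [Ne, ZMod.natCast_eq_zero_iff]
  have hρ : (q : ZMod p) ^ 2 ^ j = -1 := by
    have h0 : ((q ^ 2 ^ j + 1 : ℕ) : ZMod p) = 0 := by
      rw [ZMod.natCast_eq_zero_iff]; exact hdvd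
    push_cast at h0
    linear_combination h0
  have hρ1 : (q : ZMod p) ^ 2 ^ (j + 1) = 1 := by
    rw [pow_succ, pow_mul, hρ]; ring
  have hdvd1 : orderOf (q : ZMod p) ∣ 2 ^ (j + 1) := orderOf_dvd_of_pow_eq_one hρ1
  obtain ⟨i, hile, hio⟩ := (Nat.dvd_prime_pow Nat.prime_two).mp hdvd1
  have hij : i = j + 1 := by
    by_contra hne
    have hi : i ≤ j := by omega
    have : orderOf (q : ZMod p) ∣ 2 ^ j := hio ▸ pow_dvd_pow 2 hi
    have h1 : (q : ZMod p) ^ 2 ^ j = 1 := orderOf_dvd_iff_pow_eq_one.mp this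
    rw [hρ] at h1
    have h2 : (2 : ZMod p) = 0 := by linear_combination -h1
    have : ((2 : ℕ) : ZMod p) = 0 := by exact_mod_cast h2
    rw [ZMod.natCast_eq_zero_iff] at this
    rcases (Nat.prime_dvd_prime_iff_eq hp Nat.prime_two).mp this with rfl
    exact hp2 rfl
  have hferm : (q : ZMod p) ^ (p - 1) = 1 := ZMod.pow_card_sub_one_eq_one hρ0
  have hdvd2 : 2 ^ (j + 1) ∣ p - 1 := by
    rw [← hij, ← hio]
    exact orderOf_dvd_of_pow_eq_one hferm
  have hple : 2 ^ (j + 1) ≤ p - 1 := Nat.le_of_dvd (by have := hp.two_le; omega) hdvd2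
  have := hp.two_le
  omega

theorem stmt_14 (q : ℕ) [Fact q.Prime] (hodd : q ≠ 2) :
    ∃ x : ℕ → AlgebraicClosure (ZMod q),
      (x 1) ^ (q ^ 2) = x 1 ∧
      (∀ n, 2 ≤ n → (x n) ^ 2 + x n = 2⁻¹ * x (n - 1)) ∧
      (∀ n, 1 ≤ n → (x n) ^ (q ^ 2 ^ n) = x n) ∧
      (∀ n, 2 ≤ n → ¬ (x n) ^ (q ^ 2 ^ (n - 1)) = x n) ∧
      (∀ n, 2 ≤ n →
        orderOf (x n) > 2 ^ ((n ^ 2 + 3 * n) / 2 + padicValNat 2 (q - 1) - 2)) := by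
  classical
  have hq : q.Prime := Fact.out
  have hq3 : 3 ≤ q := by have := hq.two_le; omega
  have hqodd : Odd q := hq.odd_of_ne_two hodd
  set Ω := AlgebraicClosure (ZMod q) with hΩdef
  have h2ne : (2 : Ω) ≠ 0 := by
    have h' : ((2 : ℕ) : Ω) ≠ 0 := by
      rw [Ne, CharP.cast_eq_zero_iff Ω q]
      intro hdvd
      have := Nat.le_of_dvd (by norm_num) hdvd
      omega
    simpa using h'
  have h2i : (2 : Ω) * 2⁻¹ = 1 := mul_inv_cancel₀ h2ne
  have h2iq : (2⁻¹ : Ω) ≠ 0 := inv_ne_zero h2ne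
  have hm1 : (-1 : Ω) ≠ 1 := by
    intro h
    apply h2ne
    linear_combination -h
  have hfixc : ∀ c : Ω, c ≠ 0 → c ^ (q - 1) = 1 → ∀ m : ℕ, c ^ q ^ m = c := by
    intro c hc hc1 m
    obtain ⟨d, hd⟩ : (q - 1) ∣ (q ^ m - 1) := by
      simpa using Nat.sub_dvd_pow_sub_pow q 1 m
    have hq1 : 1 ≤ q ^ m := Nat.one_le_pow _ _ (by omega)
    have hone : c ^ (q ^ m - 1) = 1 := by rw [hd, pow_mul, hc1, one_pow]
    calc c ^ q ^ m = c ^ (q ^ m - 1) * c := by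
          rw [← pow_succ]
          congr 1
          omega
    _ = c := by rw [hone, one_mul]
  have h2pow : (2 : Ω) ^ q = 2 := by
    have h' : ((1 : Ω) + 1) ^ q = 1 ^ q + 1 ^ q := add_pow_char (x := (1:Ω)) (y := (1:Ω)) (p := q)
    norm_num at h'
    exact h'
  have h2inv1 : (2⁻¹ : Ω) ^ (q - 1) = 1 := by
    have hq' : (2⁻¹ : Ω) ^ q = 2⁻¹ := by rw [inv_pow, h2pow]
    have hstep : (2⁻¹ : Ω) ^ (q - 1) * 2⁻¹ = 2⁻¹ := by
      rw [← pow_succ]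
      have : q - 1 + 1 = q := by omega
      rw [this, hq']
    exact mul_right_cancel₀ h2iq (by rw [hstep, one_mul])
  have hoddpow : ∀ e : ℕ, Odd (q ^ e) := fun e => hqodd.pow
  have hMex : ∀ k : ℕ, 2 * ((q ^ 2 ^ (k + 1) - 1) / 2) + 1 = q ^ 2 ^ (k + 1) := by
    intro k
    obtain ⟨t, ht⟩ := hoddpow (2 ^ (k + 1))
    omega
  set M : ℕ → ℕ := fun k => (q ^ 2 ^ (k + 1) - 1) / 2 with hMdef
  have hM : ∀ k, 2 * M k + 1 = q ^ 2 ^ (k + 1) := hMex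
  have h8 : ∀ k, q ^ 2 ^ (k + 1) % 8 = 1 := by
    intro k
    have h' : q ^ 2 ^ (k + 1) = (q ^ 2 ^ k) ^ 2 := by
      rw [pow_succ 2 k, pow_mul]
    rw [h']
    exact aux_odd_sq_mod8 (hoddpow _)
  have hM4 : ∀ k, M k % 4 = 0 := by
    intro k
    have h1 := hM k
    have h2' := h8 k
    omega
  have hMpos : ∀ k, 0 < M k := by
    intro k
    have h1 := hM k
    have h3 : 3 ≤ q ^ 2 ^ (k + 1) := le_trans hq3 (Nat.le_self_pow (Nat.two_pow_pos (k + 1)).ne' q)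
    omega
  have hModd1 : ∀ k, Odd (M k + 1) := by
    intro k
    have := hM4 k
    exact Nat.odd_iff.mpr (by omega)
  have hMone : ∀ k, (-1 : Ω) ^ M k = 1 := by
    intro k
    have := hM4 k
    exact Even.neg_one_pow (Nat.even_iff.mpr (by omega))
  have hMrec : ∀ k, M (k + 1) = 2 * M k * (M k + 1) := by
    intro k
    have h1 := hM k
    have h2' := hM (k + 1)
    have h3 : q ^ 2 ^ (k + 2) = (q ^ 2 ^ (k + 1)) ^ 2 := by
      rw [pow_succ 2 (k+1), pow_mul]
    rw [h3, ← h1] at h2'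
    have h4 : (2 * M k + 1) ^ 2 = 2 * (2 * M k * (M k + 1)) + 1 := by ring
    rw [h4] at h2'
    have h5 := Nat.add_right_cancel h2'
    exact Nat.eq_of_mul_eq_mul_left (by norm_num) h5
  -- seed construction
  obtain ⟨gel, hgel⟩ := IsAlgClosed.exists_pow_nat_eq (k := Ω) (-1 : Ω) (hMpos 0)
  have hgne : gel ≠ 0 := by
    intro h
    rw [h, zero_pow (hMpos 0).ne'] at hgel
    exact hm1 (by linear_combination (-2 : Ω) * hgel)
  have hgn1 : gel ≠ 1 := by
    intro h
    rw [h, one_pow] at hgel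
    exact hm1 hgel.symm
  have hgnm1 : gel ≠ -1 := by
    intro h
    rw [h, hMone 0] at hgel
    exact hm1 hgel.symm
  have hq2e : q ^ 2 = 2 * M 0 + 1 := by
    rw [hM 0]
    norm_num
  have hgfix : gel ^ q ^ 2 = gel := by
    have h2' : gel ^ (2 * M 0) = 1 := by
      rw [mul_comm, pow_mul, hgel, neg_one_sq]
    rw [hq2e, pow_succ, h2', one_mul]
  have hunit : ∀ y : Ω, y ≠ 0 → y ^ q ^ 2 = y → y ^ (2 * M 0) = 1 := by
    intro y hy hfix
    rw [hq2e, pow_succ] at hfix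
    exact mul_right_cancel₀ hy (by rw [hfix, one_mul])
  set xg : Ω := (1 + gel⁻¹) * 2⁻¹ with hxgdef
  set yg : Ω := (gel⁻¹ - 1) * 2⁻¹ with hygdef
  have hfixq2 : ∀ a : Ω, a ≠ 0 → a ^ (q:ℕ) ^ 2 = a → a⁻¹ ^ (q:ℕ) ^ 2 = a⁻¹ := by
    intro a ha hfix
    rw [inv_pow, hfix]
  have h2invq2 : (2⁻¹ : Ω) ^ (q : ℕ) ^ 2 = 2⁻¹ := hfixc 2⁻¹ h2iq h2inv1 2
  have hxgfix : xg ^ (q:ℕ) ^ 2 = xg := by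
    rw [hxgdef, mul_pow, h2invq2]
    have : ((1 : Ω) + gel⁻¹) ^ (q:ℕ) ^ 2 = 1 ^ (q:ℕ) ^ 2 + gel⁻¹ ^ (q:ℕ) ^ 2 := add_pow_char_pow ..
    rw [this, one_pow, hfixq2 gel hgne hgfix]
  have hygfix : yg ^ (q:ℕ) ^ 2 = yg := by
    rw [hygdef, mul_pow, h2invq2]
    have : (gel⁻¹ - (1:Ω)) ^ (q:ℕ) ^ 2 = gel⁻¹ ^ (q:ℕ) ^ 2 - 1 ^ (q:ℕ) ^ 2 := sub_pow_char_pow ..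
    rw [this, one_pow, hfixq2 gel hgne hgfix]
  have hxgne : xg ≠ 0 := by
    intro h
    rcases mul_eq_zero.mp h with h' | h'
    · apply hgnm1
      have hinv : gel⁻¹ = -1 := by linear_combination h'
      rw [← inv_inv gel, hinv]
      norm_num
    · exact h2iq h'
  have hygne : yg ≠ 0 := by
    intro h
    rcases mul_eq_zero.mp h with h' | h'
    · apply hgn1
      have hinv : gel⁻¹ = 1 := by linear_combination h'
      rw [← inv_inv gel, hinv]
      norm_num
    · exact h2iq h'
  set z1 : Ω := gel * xg ^ 2 with hz1def
  have hz1M : z1 ^ M 0 = -1 := by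
    have hxgpow : xg ^ (2 * M 0) = 1 := hunit xg hxgne hxgfix
    rw [hz1def, mul_pow, hgel, ← pow_mul, hxgpow, mul_one]
  have hz1x : z1 - 1 = gel * yg ^ 2 := by
    rw [hz1def, hxgdef, hygdef]
    linear_combination (4 * (2⁻¹ : Ω) ^ 2) * mul_inv_cancel₀ hgne + (2 * (2⁻¹ : Ω) + 1) * h2i
  have h2invM : (2⁻¹ : Ω) ^ M 0 = 1 := by
    obtain ⟨t, ht⟩ := hqodd
    have hM0eq : M 0 = (q - 1) * (t + 1) := by
      have h1 := hq2e
      have h3 : q ^ 2 = 2 * ((q - 1) * (t + 1)) + 1 := by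
        have e1 : q - 1 = 2 * t := by omega
        have e2 : q ^ 2 = (2 * t + 1) ^ 2 := by rw [← ht]
        have e3 : (2 * t + 1) ^ 2 = 2 * (2 * t * (t + 1)) + 1 := by ring
        rw [e2, e3, e1]
      rw [h3] at h1
      have h5 := Nat.add_right_cancel h1
      exact (Nat.eq_of_mul_eq_mul_left (by norm_num : 0 < 2) h5).symm
    rw [hM0eq, pow_mul, h2inv1, one_pow]
  have hX1 : ((z1 - 1) * 2⁻¹) ^ M 0 = -1 := by
    have hygpow : yg ^ (2 * M 0) = 1 := hunit yg hygne hygfix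
    rw [hz1x, mul_pow, mul_pow, hgel, ← pow_mul, hygpow, h2invM]
    ring
  -- square-root chain
  have hsqex : ∀ a : Ω, ∃ b : Ω, b ^ 2 = a := fun a => IsAlgClosed.exists_pow_nat_eq a two_pos
  choose sq hsq using hsqex
  set zf : ℕ → Ω := fun n => Nat.rec z1 (fun _ ih => sq ih) n with hzfdef
  have hzfs : ∀ k, zf (k + 1) ^ 2 = zf k := fun k => hsq (zf k)
  have hP2 : ∀ k, zf k ^ M k = -1 := by
    intro k
    induction k with
    | zero => exact hz1M
    | succ k ih =>
      have h1 : zf (k + 1) ^ (2 * M k) = -1 := by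
        rw [pow_mul, hzfs k, ih]
      rw [hMrec k, pow_mul, h1]
      exact Odd.neg_one_pow (hModd1 k)
  have hzne : ∀ k, zf k ≠ 0 := by
    intro k h
    have h' := hP2 k
    rw [h, zero_pow (hMpos k).ne'] at h'
    exact hm1 (by linear_combination (-2 : Ω) * h')
  have hzn1 : ∀ k, zf k ≠ 1 := by
    intro k h
    have h' := hP2 k
    rw [h, one_pow] at h'
    exact hm1 h'.symm
  have hzfix : ∀ k, zf k ^ q ^ 2 ^ (k + 1) = zf k := by
    intro k
    rw [← hM k, pow_succ, mul_comm 2 (M k), pow_mul, hP2 k, neg_one_sq, one_mul]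
  have hP3 : ∀ k, zf (k + 1) ^ q ^ 2 ^ (k + 1) = -zf (k + 1) := by
    intro k
    have hexp : q ^ 2 ^ (k + 1) = 2 * M k + 1 := (hM k).symm
    have hneg : zf (k + 1) ^ (2 * M k) = -1 := by
      rw [pow_mul, hzfs k, hP2 k]
    have h1 : (zf (k + 1) ^ (2 * M k + 1)) ^ 2 = zf (k + 1) ^ 2 := by
      have e : (zf (k + 1) ^ (2 * M k + 1)) ^ 2
          = (zf (k + 1) ^ (2 * M k)) ^ 2 * zf (k + 1) ^ 2 := by ring
      rw [e, hneg]
      ring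
    have h2' : (zf (k + 1) ^ (2 * M k + 1) - zf (k + 1))
        * (zf (k + 1) ^ (2 * M k + 1) + zf (k + 1)) = 0 := by linear_combination h1
    rcases mul_eq_zero.mp h2' with h3 | h3
    · exfalso
      have hAe : zf (k + 1) ^ (2 * M k + 1) = zf (k + 1) := by linear_combination h3
      rw [pow_succ, hneg] at hAe
      have : -zf (k+1) = zf (k+1) := by linear_combination hAe
      have hz0 : zf (k + 1) = 0 := by
        have h4 : (2:Ω) * zf (k+1) = 0 := by linear_combination -this
        rcases mul_eq_zero.mp h4 with h5 | h5
        · exact absurd h5 h2ne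
        · exact h5
      exact hzne (k + 1) hz0
    · rw [hexp]
      linear_combination h3
  -- the sequence x
  set x : ℕ → Ω := fun n => match n with
    | 0 => 0
    | Nat.succ k => (zf k - 1) * 2⁻¹ with hxdef
  have hxval : ∀ k : ℕ, x (k + 1) = (zf k - 1) * 2⁻¹ := fun k => rfl
  have hxmem : ∀ n : ℕ, 1 ≤ n → x n ^ q ^ 2 ^ n = x n := by
    intro n hn
    obtain ⟨k, rfl⟩ : ∃ k, n = k + 1 := ⟨n - 1, by omega⟩
    rw [hxval, mul_pow]
    have hsub : (zf k - (1:Ω)) ^ q ^ 2 ^ (k+1)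
        = zf k ^ q ^ 2 ^ (k+1) - 1 ^ q ^ 2 ^ (k+1) := sub_pow_char_pow ..
    rw [hsub, one_pow, hzfix k, hfixc 2⁻¹ h2iq h2inv1]
  have hxconj : ∀ n : ℕ, 2 ≤ n → x n ^ q ^ 2 ^ (n - 1) = -1 - x n := by
    intro n hn
    obtain ⟨k, rfl⟩ : ∃ k, n = k + 2 := ⟨n - 2, by omega⟩
    have he : (k + 2 : ℕ) - 1 = k + 1 := rfl
    rw [he, hxval (k+1), mul_pow]
    have hsub : (zf (k+1) - (1:Ω)) ^ q ^ 2 ^ (k+1)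
        = zf (k+1) ^ q ^ 2 ^ (k+1) - 1 ^ q ^ 2 ^ (k+1) := sub_pow_char_pow ..
    rw [hsub, one_pow, hP3 k, hfixc 2⁻¹ h2iq h2inv1]
    linear_combination (-1 : Ω) * h2i
  have hxne : ∀ n : ℕ, 1 ≤ n → x n ≠ 0 := by
    intro n hn h
    obtain ⟨k, rfl⟩ : ∃ k, n = k + 1 := ⟨n - 1, by omega⟩
    rw [hxval] at h
    rcases mul_eq_zero.mp h with h' | h'
    · exact hzn1 k (by linear_combination h')
    · exact h2iq h'
  have hxrec : ∀ n : ℕ, 2 ≤ n → x n ^ 2 + x n = 2⁻¹ * x (n - 1) := by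
    intro n hn
    obtain ⟨k, rfl⟩ : ∃ k, n = k + 2 := ⟨n - 2, by omega⟩
    have he : (k + 2 : ℕ) - 1 = k + 1 := rfl
    rw [he, hxval (k+1), hxval k, ← hzfs k]
    linear_combination (-(zf (k+1) - 1) * 2⁻¹) * h2i
  have hxnot : ∀ n : ℕ, 2 ≤ n → ¬ x n ^ q ^ 2 ^ (n - 1) = x n := by
    intro n hn h
    rw [hxconj n hn] at h
    obtain ⟨k, rfl⟩ : ∃ k, n = k + 2 := ⟨n - 2, by omega⟩
    rw [hxval (k+1)] at h
    have hz0 : zf (k+1) = 0 := by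
      linear_combination (-1 : Ω) * h + (1 - zf (k+1)) * h2i
    exact hzne (k+1) hz0
  have hxprod : ∀ n : ℕ, 2 ≤ n → x n ^ (q ^ 2 ^ (n - 1) + 1) = -(2⁻¹ * x (n - 1)) := by
    intro n hn
    rw [pow_succ, hxconj n hn, ← hxrec n hn]
    ring
  refine ⟨x, ?_, fun n hn => hxrec n hn, fun n hn => hxmem n hn, fun n hn => hxnot n hn, ?_⟩
  · have := hxmem 1 le_rfl
    norm_num at this
    exact this
  -- the order lower bound
  intro n hn
  set ν : ℕ := padicValNat 2 (q - 1) with hνdef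
  set K : ℕ → ℕ := fun j => ∏ l ∈ Finset.Ico j n, (q ^ 2 ^ l + 1) with hKdef
  set E : ℕ → ℕ := fun j => orderOf (x n ^ K j) with hEdef
  have hKn : K n = 1 := by
    rw [hKdef]
    simp
  have hEn : E n = orderOf (x n) := by
    simp only [hEdef]
    rw [hKn, pow_one]
  have hKsplit : ∀ j, j < n → K j = (q ^ 2 ^ j + 1) * K (j + 1) :=
    fun j hj => Finset.prod_eq_prod_Ico_succ_bot hj _
  have hrep : ∀ j, 1 ≤ j → j ≤ n →
      ∃ c : Ω, c ≠ 0 ∧ c ^ (q - 1) = 1 ∧ x n ^ K j = c * x j := by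
    suffices h : ∀ i j, j + i = n → 1 ≤ j →
        ∃ c : Ω, c ≠ 0 ∧ c ^ (q - 1) = 1 ∧ x n ^ K j = c * x j by
      intro j h1 h2
      exact h (n - j) j (by omega) h1
    intro i
    induction i with
    | zero =>
      intro j hj h1
      obtain rfl : j = n := by omega
      exact ⟨1, one_ne_zero, one_pow _, by rw [hKn, pow_one, one_mul]⟩
    | succ i ih =>
      intro j hj h1
      obtain ⟨c, hc0, hc1, hcx⟩ := ih (j + 1) (by omega) (by omega)
      have hxp : x n ^ K j = (x n ^ K (j + 1)) ^ (q ^ 2 ^ j + 1) := by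
        rw [hKsplit j (by omega), mul_comm, pow_mul]
      have hcq : c ^ q ^ 2 ^ j = c := hfixc c hc0 hc1 _
      have hxj1 : x (j + 1) ^ (q ^ 2 ^ j + 1) = -(2⁻¹ * x j) := by
        have h' := hxprod (j + 1) (by omega)
        rwa [Nat.add_sub_cancel] at h'
      have hqe : Even (q - 1) := by
        obtain ⟨t, ht⟩ := hqodd
        exact Nat.even_iff.mpr (by omega)
      refine ⟨-(c ^ 2 * 2⁻¹), ?_, ?_, ?_⟩
      · intro h'
        rcases mul_eq_zero.mp (neg_eq_zero.mp h') with h'' | h''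
        · exact hc0 (pow_eq_zero_iff (by norm_num) |>.mp h'')
        · exact h2iq h''
      · rw [neg_pow, Even.neg_one_pow hqe, one_mul, mul_pow, ← pow_mul,
          mul_comm 2 (q - 1), pow_mul, hc1, one_pow, h2inv1, one_mul]
      · rw [hxp, hcx, mul_pow, hxj1, pow_succ, hcq]
        ring
  have hEfin : ∀ j, 1 ≤ j → j ≤ n → E j ∣ q ^ 2 ^ j - 1 ∧ 0 < E j := by
    intro j h1 h2
    obtain ⟨c, hc0, hc1, hcx⟩ := hrep j h1 h2
    have htne : x n ^ K j ≠ 0 := by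
      rw [hcx]
      exact mul_ne_zero hc0 (hxne j h1)
    have htfix : (x n ^ K j) ^ q ^ 2 ^ j = x n ^ K j := by
      rw [hcx, mul_pow, hfixc c hc0 hc1, hxmem j h1]
    have hq1 : 1 ≤ q ^ 2 ^ j := Nat.one_le_pow _ _ (by omega)
    have hpow1 : (x n ^ K j) ^ (q ^ 2 ^ j - 1) = 1 := by
      have h3 : (x n ^ K j) ^ (q ^ 2 ^ j - 1) * (x n ^ K j) = x n ^ K j := by
        rw [← pow_succ, (by omega : q ^ 2 ^ j - 1 + 1 = q ^ 2 ^ j)]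
        exact htfix
      exact mul_right_cancel₀ htne (by rw [h3, one_mul])
    have hQ3 : 3 ≤ q ^ 2 ^ j := le_trans hq3 (Nat.le_self_pow (Nat.two_pow_pos j).ne' q)
    constructor
    · exact orderOf_dvd_of_pow_eq_one hpow1
    · exact IsOfFinOrder.orderOf_pos
        (isOfFinOrder_iff_pow_eq_one.mpr ⟨q ^ 2 ^ j - 1, by omega, hpow1⟩)
  have hEmul : ∀ j, 1 ≤ j → j + 1 ≤ n →
      E (j + 1) = E j * Nat.gcd (E (j + 1)) (q ^ 2 ^ j + 1) := by
    intro j h1 h2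
    have hxp : x n ^ K j = (x n ^ K (j + 1)) ^ (q ^ 2 ^ j + 1) := by
      rw [hKsplit j (by omega), mul_comm, pow_mul]
    have hEj : E j = E (j + 1) / Nat.gcd (E (j + 1)) (q ^ 2 ^ j + 1) := by
      simp only [hEdef]
      rw [hxp, orderOf_pow' _ (by positivity)]
    rw [hEj, Nat.div_mul_cancel (Nat.gcd_dvd_left _ _)]
  have hE1 : 2 ^ (ν + 1) ∣ E 1 := by
    obtain ⟨c, hc0, hc1, hcx⟩ := hrep 1 le_rfl (by omega)
    obtain ⟨t, ht⟩ := hqodd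
    have hcM : c ^ M 0 = 1 := by
      have hM0eq : M 0 = (q - 1) * (t + 1) := by
        have h1 := hq2e
        have h3 : q ^ 2 = 2 * ((q - 1) * (t + 1)) + 1 := by
          have e1 : q - 1 = 2 * t := by omega
          have e2 : q ^ 2 = (2 * t + 1) ^ 2 := by rw [← ht]
          have e3 : (2 * t + 1) ^ 2 = 2 * (2 * t * (t + 1)) + 1 := by ring
          rw [e2, e3, e1]
        rw [h3] at h1
        exact (Nat.eq_of_mul_eq_mul_left (by norm_num : 0 < 2) (Nat.add_right_cancel h1)).symm
      rw [hM0eq, pow_mul, hc1, one_pow]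
    have hx1M : x 1 ^ M 0 = -1 := hX1
    have htM : (x n ^ K 1) ^ M 0 = -1 := by
      rw [hcx, mul_pow, hcM, one_mul, hx1M]
    have htM2 : (x n ^ K 1) ^ (2 * M 0) = 1 := by
      rw [mul_comm, pow_mul, htM, neg_one_sq]
    have hd1 : E 1 ∣ 2 * M 0 := orderOf_dvd_of_pow_eq_one htM2
    have hd2 : ¬ E 1 ∣ M 0 := by
      intro hdd
      have h' := orderOf_dvd_iff_pow_eq_one.mp hdd
      rw [htM] at h'
      exact hm1 h'
    have hdq : 2 ^ (ν + 1) ∣ 2 * M 0 := by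
      have ha : 2 ^ ν ∣ q - 1 := hνdef ▸ pow_padicValNat_dvd
      obtain ⟨a, ha'⟩ := ha
      refine ⟨a * (t + 1), ?_⟩
      have e1 : 2 * M 0 = (q - 1) * (q + 1) := by
        have e2 : q ^ 2 = (2 * t + 1) ^ 2 := by rw [← ht]
        have e3 : (2 * t + 1) ^ 2 = 2 * ((2 * t) * (2 * t + 2)) / 2 + 1 := by
          rw [Nat.mul_div_cancel_left _ (by norm_num : 0 < 2)]
          ring
        have e4 : (q - 1) * (q + 1) = 2 * t * (2 * t + 2) := by
          rw [(by omega : q - 1 = 2 * t), (by omega : q + 1 = 2 * t + 2)]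
        have e5 := hq2e
        rw [e2, e3] at e5
        rw [e4]
        omega
      rw [e1, ha', (by omega : q + 1 = 2 * (t + 1))]
      ring
    exact aux_two_pow_dvd hd1 hd2 hdq
  have hE1dvd : ∀ j, 1 ≤ j → j ≤ n → E 1 ∣ E j := by
    intro j
    induction j with
    | zero => omega
    | succ j ih =>
      intro h1 h2
      rcases Nat.lt_or_ge 1 (j + 1) with hgt | hle
      · have hj1 : 1 ≤ j := by omega
        rw [hEmul j hj1 h2]
        exact (ih hj1 (by omega)).mul_right _
      · have he : j + 1 = 1 := by omega
        rw [he]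
  have hGge : ∀ j, 1 ≤ j → j + 1 ≤ n → 2 ^ (j + 2) ≤ Nat.gcd (E (j + 1)) (q ^ 2 ^ j + 1) := by
    intro j h1 h2
    have hQpos : 0 < q ^ 2 ^ j + 1 := by positivity
    have hGpos : 0 < Nat.gcd (E (j + 1)) (q ^ 2 ^ j + 1) := Nat.gcd_pos_of_pos_right _ hQpos
    have h2E : 2 ∣ E (j + 1) :=
      dvd_trans (dvd_trans ⟨2 ^ ν, by rw [pow_succ]; ring⟩ hE1) (hE1dvd (j + 1) (by omega) h2)
    have h2Q : 2 ∣ q ^ 2 ^ j + 1 := by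
      obtain ⟨t, ht⟩ := hoddpow (2 ^ j)
      exact ⟨t + 1, by omega⟩
    have h2G : 2 ∣ Nat.gcd (E (j + 1)) (q ^ 2 ^ j + 1) := Nat.dvd_gcd h2E h2Q
    obtain ⟨w, hw, hwodd⟩ : ∃ w, q ^ 2 ^ j + 1 = 2 * w ∧ ¬ 2 ∣ w := by
      have h8j : q ^ 2 ^ j % 8 = 1 := by
        have h' := h8 (j - 1)
        rwa [(by omega : j - 1 + 1 = j)] at h'
      exact ⟨(q ^ 2 ^ j + 1) / 2, by omega, by omega⟩
    rcases aux_pow2_or_oddprime hGpos.ne' with ⟨p, hp, hp2, hpG⟩ | ⟨k, hk⟩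
    · have hpQ : p ∣ q ^ 2 ^ j + 1 := hpG.trans (Nat.gcd_dvd_right _ _)
      have hpbound := aux_prime_bound hp hp2 hpQ
      have hcop : Nat.Coprime 2 p := (Nat.prime_two.coprime_iff_not_dvd).mpr (by
        intro h'
        rcases (Nat.prime_dvd_prime_iff_eq Nat.prime_two hp).mp h' with rfl
        exact hp2 rfl)
      have h2p : 2 * p ∣ Nat.gcd (E (j + 1)) (q ^ 2 ^ j + 1) :=
        hcop.mul_dvd_of_dvd_of_dvd h2G hpG
      have hle2p : 2 * p ≤ Nat.gcd (E (j + 1)) (q ^ 2 ^ j + 1) := Nat.le_of_dvd hGpos h2p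
      have hexp : 2 ^ (j + 2) = 2 * 2 ^ (j + 1) := by ring
      omega
    · exfalso
      have hG2 : Nat.gcd (E (j + 1)) (q ^ 2 ^ j + 1) ∣ 2 := by
        have hdvd2w : (2 : ℕ) ^ k ∣ 2 * w := by
          rw [← hw, ← hk]
          exact Nat.gcd_dvd_right _ _
        have hcop : Nat.Coprime (2 ^ k) w :=
          Nat.Coprime.pow_left _ ((Nat.prime_two.coprime_iff_not_dvd).mpr hwodd)
        rw [hk]
        exact hcop.dvd_of_dvd_mul_right hdvd2w
      have hEd : E (j + 1) ∣ q ^ 2 ^ (j + 1) - 1 := (hEfin (j + 1) (by omega) h2).1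
      have hfact : q ^ 2 ^ (j + 1) - 1 = 2 * (q ^ 2 ^ j - 1) * w := by
        have hpow : q ^ 2 ^ (j + 1) = q ^ 2 ^ j * q ^ 2 ^ j := by
          rw [pow_succ 2 j, pow_mul]
          ring
        have ha1 : 1 ≤ q ^ 2 ^ j := Nat.one_le_pow _ _ (by omega)
        have h3 : q ^ 2 ^ j * q ^ 2 ^ j = 2 * (q ^ 2 ^ j - 1) * w + 1 := by
          zify [ha1]
          have hw' : (q : ℤ) ^ 2 ^ j + 1 = 2 * w := by exact_mod_cast hw
          linear_combination ((q : ℤ) ^ 2 ^ j - 1) * hw'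
        omega
      rw [hfact] at hEd
      have hcopw : Nat.Coprime (E (j + 1)) w := by
        have hgw : Nat.gcd (E (j + 1)) w ∣ 2 := by
          refine dvd_trans ?_ hG2
          exact Nat.dvd_gcd (Nat.gcd_dvd_left _ _) ((Nat.gcd_dvd_right _ _).trans ⟨2, by omega⟩)
        rcases (Nat.dvd_prime Nat.prime_two).mp hgw with h' | h'
        · exact h'
        · exact absurd (h' ▸ Nat.gcd_dvd_right (E (j + 1)) w) hwodd
      have hE2Q : E (j + 1) ∣ 2 * (q ^ 2 ^ j - 1) := by
        apply hcopw.dvd_of_dvd_mul_right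
        exact hEd
      obtain ⟨c, hc0, hc1, hcx⟩ := hrep (j + 1) (by omega) h2
      have hpw : (x n ^ K (j + 1)) ^ (2 * (q ^ 2 ^ j - 1)) = 1 :=
        orderOf_dvd_iff_pow_eq_one.mp hE2Q
      have hu : (x n ^ K (j + 1)) ^ (q ^ 2 ^ j - 1) * (x n ^ K (j + 1)) ^ (q ^ 2 ^ j - 1) = 1 := by
        rw [← pow_add, (by ring : q ^ 2 ^ j - 1 + (q ^ 2 ^ j - 1) = 2 * (q ^ 2 ^ j - 1))]
        exact hpw
      have hq1 : 1 ≤ q ^ 2 ^ j := Nat.one_le_pow _ _ (by omega)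
      have htQ : (x n ^ K (j + 1)) ^ q ^ 2 ^ j
          = (x n ^ K (j + 1)) ^ (q ^ 2 ^ j - 1) * (x n ^ K (j + 1)) := by
        rw [← pow_succ, (by omega : q ^ 2 ^ j - 1 + 1 = q ^ 2 ^ j)]
      have hconjx : x (j + 1) ^ q ^ 2 ^ j = -1 - x (j + 1) := by
        have h' := hxconj (j + 1) (by omega)
        rwa [Nat.add_sub_cancel] at h'
      have htQ2 : (x n ^ K (j + 1)) ^ q ^ 2 ^ j = c * (-1 - x (j + 1)) := by
        rw [hcx, mul_pow, hfixc c hc0 hc1, hconjx]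
      rcases mul_self_eq_one_iff.mp hu with h' | h'
      · have h6 : c * (-1 - x (j + 1)) = c * x (j + 1) := by
          rw [← htQ2, htQ, h', one_mul, hcx]
        have h7 : -1 - x (j + 1) = x (j + 1) := mul_left_cancel₀ hc0 h6
        apply hxnot (j + 1) (by omega)
        rw [Nat.add_sub_cancel, hconjx]
        exact h7
      · have h6 : c * (-1 - x (j + 1)) = c * (-x (j + 1)) := by
          rw [← htQ2, htQ, h', hcx]
          ring
        have h7 : -1 - x (j + 1) = -x (j + 1) := mul_left_cancel₀ hc0 h6
        exact h2ne (by linear_combination (-2 : Ω) * h7)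
  -- final induction
  have hsum : ∀ m' : ℕ, 2 * (∑ i ∈ Finset.range m', (i + 3)) = m' * m' + 5 * m' := by
    intro m'
    induction m' with
    | zero => simp
    | succ m' ih =>
      rw [Finset.sum_range_succ, Nat.mul_add, ih]
      ring
  have hEbound : ∀ j, 1 ≤ j → j ≤ n →
      2 ^ (ν + 1 + ∑ i ∈ Finset.range (j - 1), (i + 3)) ≤ E j := by
    intro j
    induction j with
    | zero => omega
    | succ j ih =>
      intro h1 h2
      rcases Nat.lt_or_ge 1 (j + 1) with hgt | hle
      · have hj1 : 1 ≤ j := by omega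
        have hEj := ih hj1 (by omega)
        have hG := hGge j hj1 h2
        have hgs : ∑ i ∈ Finset.range ((j + 1) - 1), (i + 3)
            = (∑ i ∈ Finset.range (j - 1), (i + 3)) + (j + 2) := by
          obtain ⟨i, rfl⟩ : ∃ i, j = i + 1 := ⟨j - 1, by omega⟩
          rw [Nat.add_sub_cancel, Nat.add_sub_cancel, Finset.sum_range_succ]
        rw [hEmul j hj1 h2, hgs, ← add_assoc, pow_add]
        exact Nat.mul_le_mul hEj hG
      · have he : j + 1 = 1 := by omega
        rw [he]
        simpa using Nat.le_of_dvd (hEfin 1 le_rfl (by omega)).2 hE1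
  have hfin := hEbound n (by omega) le_rfl
  rw [hEn] at hfin
  refine lt_of_lt_of_le ?_ hfin
  apply Nat.pow_lt_pow_right (by norm_num)
  have hgn : 2 * (∑ i ∈ Finset.range (n - 1), (i + 3)) + 4 = n ^ 2 + 3 * n := by
    obtain ⟨m, rfl⟩ : ∃ m, n = m + 2 := ⟨n - 2, by omega⟩
    rw [(by omega : (m + 2) - 1 = m + 1), hsum (m + 1)]
    ring
  generalize hS : (∑ i ∈ Finset.range (n - 1), (i + 3)) = S at hgn ⊢
  generalize hA : n ^ 2 + 3 * n = A at hgn ⊢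
  omega
end
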